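/- Let h > 1, R = √(h(h−1)), and let γ : [0,2π] → ℝ² be the counterclockwise parametrization γ(t) = (R cos t, h + R sin t) of the oval {H = h} (along which 2y − 1 ≠ 0). Then: ∫_γ ω₁ = ∫_γ ω₃ = −2πh(h−1), ∫_γ ω₂ = 0, ∫_γ ω₄ = 0, and ∫_γ ω₅ = 4π(h−1). Consequently, for any λ₁,…,λ₅ ∈ ℝ, ∫_γ (λ₁ω₁ + λ₂ω₂ + λ₃ω₃ + λ₄ω₄ + λ₅ω₅) = −2π(h−1)[h(λ₁+λ₃) − 2λ₅]; up to normalization and orientation this is the first Melnikov function M̃₁(h) = 2π(h−1)[(h−1)(λ₁+λ₃) + λ₁ + λ₃ − 2λ₅] of the second period annulus. -/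

import Mathlib

open Real

private lemma arctan_deriv (h R : ℝ) (hh : 1 < h) (hR0 : 0 ≤ R) (hR2 : R^2 = h*(h-1)) (t : ℝ) :
    HasDerivAt (fun t => Real.arctan (2*R*Real.cos t / (2*(h + R*Real.sin t))))
      (-(1/2) + 1/(2*(2*(h + R*Real.sin t) - 1))) t := by
  have hs := Real.sin_sq_add_cos_sq t
  have hsb := Real.neg_one_le_sin t
  have hsb' := Real.sin_le_one t
  have hE : 0 < 2*(h + R*Real.sin t) := by nlinarith [sq_nonneg (2*h - 2*R)]
  have hD : 0 < 2*(h + R*Real.sin t) - 1 := by nlinarith [sq_nonneg (2*h - 1 - 2*R)]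
  have hu : HasDerivAt (fun t => 2*R*Real.cos t / (2*(h + R*Real.sin t)))
      (((2*R*(-Real.sin t)) * (2*(h + R*Real.sin t)) - (2*R*Real.cos t) * (2*(R*Real.cos t)))
        / (2*(h + R*Real.sin t))^2) t := by
    exact (((Real.hasDerivAt_cos t).const_mul (2*R)).div
      ((((Real.hasDerivAt_sin t).const_mul R).const_add h).const_mul 2) hE.ne')
  have H := hu.arctan
  convert H using 1
  have h1 : (1:ℝ) + (2*R*Real.cos t / (2*(h + R*Real.sin t)))^2 ≠ 0 := by positivity
  have hE1 : h + R*Real.sin t ≠ 0 := by intro hc; rw [hc] at hE; simp at hE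
  field_simp
  ring_nf
  linear_combination ((2)*(h)^1*(R)^2 + (2)*(R)^3*(Real.sin t)^1) * hs + ((2)*(h)^1 + (2)*(R)^1*(Real.sin t)^1) * hR2

private lemma key (f g F : ℝ → ℝ) (v : ℝ) (hfg : ∀ t, f t = g t)
    (hF : ∀ t, HasDerivAt F (g t) t) (hc : Continuous g) (hv : F (2*π) - F 0 = v) :
    ∫ t in (0:ℝ)..(2*π), f t = v := by
  have h1 : ∫ t in (0:ℝ)..(2*π), f t = ∫ t in (0:ℝ)..(2*π), g t :=
    intervalIntegral.integral_congr (fun t _ => hfg t)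
  rw [h1, intervalIntegral.integral_eq_sub_of_hasDerivAt (fun t _ => hF t)
    (hc.intervalIntegrable _ _), hv]

private lemma hDpos (h R : ℝ) (hh : 1 < h) (hR0 : 0 ≤ R) (hR2 : R^2 = h*(h-1)) (t : ℝ) : 0 < 2*(h + R*Real.sin t) - 1 := by
  nlinarith [Real.neg_one_le_sin t, Real.sin_le_one t, sq_nonneg (2*h - 1 - 2*R)]

private lemma DD' (h R : ℝ) (t : ℝ) : HasDerivAt (fun t => 2*(h + R*Real.sin t) - 1) (2*(R*Real.cos t)) t :=
  ((((Real.hasDerivAt_sin t).const_mul R).const_add h).const_mul 2).sub_const 1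

private lemma hCD (h R : ℝ) (hh : 1 < h) (hR0 : 0 ≤ R) (hR2 : R^2 = h*(h-1)) (t : ℝ) : HasDerivAt (fun t => Real.cos t/(2*(h + R*Real.sin t) - 1))
    ((-Real.sin t*(2*(h + R*Real.sin t) - 1) - Real.cos t*(2*(R*Real.cos t)))
      /(2*(h + R*Real.sin t) - 1)^2) t :=
  (Real.hasDerivAt_cos t).div (DD' h R t) (hDpos h R hh hR0 hR2 t).ne'

private lemma hasD1 (h R : ℝ) (hh : 1 < h) (hR0 : 0 ≤ R) (hR2 : R^2 = h*(h-1)) (t : ℝ) :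
    HasDerivAt (fun t => (-(R^2))*(t + 2*Real.arctan (2*R*Real.cos t/(2*(h + R*Real.sin t))))
        - h*R*(Real.cos t/(2*(h + R*Real.sin t) - 1)))
      ((-(R^2)*(2*(h + R*Real.sin t) - 1) + h*R*Real.sin t*(2*(h + R*Real.sin t) - 1)
          + 2*h*R^2*Real.cos t^2)/(2*(h + R*Real.sin t) - 1)^2) t := by
  have hD := hDpos h R hh hR0 hR2 t
  have hA := arctan_deriv h R hh hR0 hR2 t
  have H : HasDerivAt (fun t => (-(R^2))*(t + 2*Real.arctan (2*R*Real.cos t/(2*(h + R*Real.sin t))))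
        - h*R*(Real.cos t/(2*(h + R*Real.sin t) - 1)))
      ((-(R^2))*(1 + 2*(-(1/2) + 1/(2*(2*(h + R*Real.sin t) - 1))))
        - h*R*((-Real.sin t*(2*(h + R*Real.sin t) - 1) - Real.cos t*(2*(R*Real.cos t)))
          /(2*(h + R*Real.sin t) - 1)^2)) t :=
    (((hasDerivAt_id t).add (hA.const_mul 2)).const_mul (-(R^2))).sub
      ((hCD h R hh hR0 hR2 t).const_mul (h*R))
  convert H using 1
  field_simp
  ring

private lemma hasD2 (h R : ℝ) (hh : 1 < h) (hR0 : 0 ≤ R) (hR2 : R^2 = h*(h-1)) (t : ℝ) :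
    HasDerivAt (fun t => h/2*Real.log (2*(h + R*Real.sin t) - 1))
      ((h*R*Real.cos t*(2*(h + R*Real.sin t) - 1))/(2*(h + R*Real.sin t) - 1)^2) t := by
  have hD := hDpos h R hh hR0 hR2 t
  have H : HasDerivAt (fun t => h/2*Real.log (2*(h + R*Real.sin t) - 1))
      (h/2*((2*(R*Real.cos t))/(2*(h + R*Real.sin t) - 1))) t :=
    ((DD' h R t).log hD.ne').const_mul (h/2)
  convert H using 1
  field_simp


private lemma hasD3 (h R : ℝ) (hh : 1 < h) (hR0 : 0 ≤ R) (hR2 : R^2 = h*(h-1)) (t : ℝ) :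
    HasDerivAt (fun t => h*(1-h)*t - h*(2*h-1)*Real.arctan (2*R*Real.cos t/(2*(h + R*Real.sin t))))
      ((h*R*Real.sin t*(2*(h + R*Real.sin t) - 1))/(2*(h + R*Real.sin t) - 1)^2) t := by
  have hD := hDpos h R hh hR0 hR2 t
  have hA := arctan_deriv h R hh hR0 hR2 t
  have H : HasDerivAt (fun t => h*(1-h)*t - h*(2*h-1)*Real.arctan (2*R*Real.cos t/(2*(h + R*Real.sin t))))
      (h*(1-h)*1 - h*(2*h-1)*(-(1/2) + 1/(2*(2*(h + R*Real.sin t) - 1)))) t :=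
    ((hasDerivAt_id t).const_mul (h*(1-h))).sub (hA.const_mul (h*(2*h-1)))
  convert H using 1
  field_simp
  ring

private lemma hasD4 (h R : ℝ) (hh : 1 < h) (hR0 : 0 ≤ R) (hR2 : R^2 = h*(h-1)) (t : ℝ) :
    HasDerivAt (fun t => -(R*Real.sin t) + (h-1)*Real.log (2*(h + R*Real.sin t) - 1)
        - (h-1)/(2*(2*(h + R*Real.sin t) - 1)))
      ((-(R*Real.cos t)*(2*(h + R*Real.sin t) - 1)^2
          + 2*(h-1)*R*Real.cos t*(2*(h + R*Real.sin t) - 1)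
          + (h-1)*R*Real.cos t)/(2*(h + R*Real.sin t) - 1)^2) t := by
  have hD := hDpos h R hh hR0 hR2 t
  have hD2 : (2*(2*(h + R*Real.sin t) - 1)) ≠ 0 := by positivity
  have H : HasDerivAt (fun t => -(R*Real.sin t) + (h-1)*Real.log (2*(h + R*Real.sin t) - 1)
        - (h-1)/(2*(2*(h + R*Real.sin t) - 1)))
      (-(R*Real.cos t) + (h-1)*((2*(R*Real.cos t))/(2*(h + R*Real.sin t) - 1))
        - ((0*(2*(2*(h + R*Real.sin t) - 1)) - (h-1)*(2*(2*(R*Real.cos t))))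
            /(2*(2*(h + R*Real.sin t) - 1))^2)) t :=
    ((((Real.hasDerivAt_sin t).const_mul R).neg).add (((DD' h R t).log hD.ne').const_mul (h-1))).sub
      ((hasDerivAt_const t (h-1)).div ((DD' h R t).const_mul 2) hD2)
  convert H using 1
  field_simp
  ring

private lemma hasD5 (h R : ℝ) (hh : 1 < h) (hR0 : 0 ≤ R) (hR2 : R^2 = h*(h-1)) (t : ℝ) :
    HasDerivAt (fun t => 2*(h-1)*t + 2*(h-1)*Real.arctan (2*R*Real.cos t/(2*(h + R*Real.sin t)))
        + R*(h-1)*(Real.cos t/(2*(h + R*Real.sin t) - 1)) + R*Real.cos t)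
      (((h-1)*(2*(h + R*Real.sin t) - 1)^2 + (h-1)*(2*(h + R*Real.sin t) - 1)
          - R*(h-1)*(Real.sin t*(2*(h + R*Real.sin t) - 1) + 2*R*Real.cos t^2)
          - R*Real.sin t*(2*(h + R*Real.sin t) - 1)^2)/(2*(h + R*Real.sin t) - 1)^2) t := by
  have hD := hDpos h R hh hR0 hR2 t
  have hA := arctan_deriv h R hh hR0 hR2 t
  have H : HasDerivAt (fun t => 2*(h-1)*t + 2*(h-1)*Real.arctan (2*R*Real.cos t/(2*(h + R*Real.sin t)))
        + R*(h-1)*(Real.cos t/(2*(h + R*Real.sin t) - 1)) + R*Real.cos t)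
      (2*(h-1)*1 + 2*(h-1)*(-(1/2) + 1/(2*(2*(h + R*Real.sin t) - 1)))
        + R*(h-1)*((-Real.sin t*(2*(h + R*Real.sin t) - 1) - Real.cos t*(2*(R*Real.cos t)))
            /(2*(h + R*Real.sin t) - 1)^2)
        + R*(-Real.sin t)) t :=
    ((((hasDerivAt_id t).const_mul (2*(h-1))).add (hA.const_mul (2*(h-1)))).add
      ((hCD h R hh hR0 hR2 t).const_mul (R*(h-1)))).add ((Real.hasDerivAt_cos t).const_mul R)
  convert H using 1
  field_simp
  ring



set_option maxHeartbeats 1000000 in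
/-- First Melnikov function of the second period annulus: for `h > 1`, along
the counterclockwise parametrization `γ(t) = (R cos t, h + R sin t)`,
`R = √(h(h−1))`, of the oval `{H = h}` (on which `2y − 1 ≠ 0`), the integrals
of `ω₁, …, ω₅` are `−2πh(h−1), 0, −2πh(h−1), 0, 4π(h−1)`; hence
`∫ λ₁ω₁ + ⋯ + λ₅ω₅ = −2π(h−1)[h(λ₁+λ₃) − 2λ₅]`. -/
theorem first_melnikov_second_annulus (h : ℝ) (hh : 1 < h) (l1 l2 l3 l4 l5 : ℝ) :
    let R := Real.sqrt (h * (h - 1))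
    let γ₁ : ℝ → ℝ := fun t => R * Real.cos t
    let γ₂ : ℝ → ℝ := fun t => h + R * Real.sin t
    let lineInt : (ℝ → ℝ → ℝ) → (ℝ → ℝ → ℝ) → ℝ := fun P Q =>
      ∫ t in (0 : ℝ)..(2 * π),
        (P (γ₁ t) (γ₂ t) * deriv γ₁ t + Q (γ₁ t) (γ₂ t) * deriv γ₂ t)
    (∀ t : ℝ, 2 * γ₂ t - 1 ≠ 0)
    -- ω₁ = (x dy − y dx)/(2y−1)²
    ∧ lineInt (fun _ y => -y / (2 * y - 1) ^ 2) (fun x y => x / (2 * y - 1) ^ 2)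
        = -(2 * π * h * (h - 1))
    -- ω₂ = (x²+y²) dy/(2y−1)²
    ∧ lineInt (fun _ _ => 0) (fun x y => (x ^ 2 + y ^ 2) / (2 * y - 1) ^ 2) = 0
    -- ω₃ = −(x²+y²) dx/(2y−1)²
    ∧ lineInt (fun x y => -(x ^ 2 + y ^ 2) / (2 * y - 1) ^ 2) (fun _ _ => 0)
        = -(2 * π * h * (h - 1))
    -- ω₄ = ((x²−y²) dy + 2xy dx)/(2y−1)²
    ∧ lineInt (fun x y => 2 * x * y / (2 * y - 1) ^ 2)
        (fun x y => (x ^ 2 - y ^ 2) / (2 * y - 1) ^ 2) = 0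
    -- ω₅ = (2xy dy − (x²−y²) dx)/(2y−1)²
    ∧ lineInt (fun x y => -(x ^ 2 - y ^ 2) / (2 * y - 1) ^ 2)
        (fun x y => 2 * x * y / (2 * y - 1) ^ 2) = 4 * π * (h - 1)
    -- the combination λ₁ω₁ + λ₂ω₂ + λ₃ω₃ + λ₄ω₄ + λ₅ω₅
    ∧ lineInt
        (fun x y => l1 * (-y / (2 * y - 1) ^ 2)
          + l3 * (-(x ^ 2 + y ^ 2) / (2 * y - 1) ^ 2)
          + l4 * (2 * x * y / (2 * y - 1) ^ 2)
          + l5 * (-(x ^ 2 - y ^ 2) / (2 * y - 1) ^ 2))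
        (fun x y => l1 * (x / (2 * y - 1) ^ 2)
          + l2 * ((x ^ 2 + y ^ 2) / (2 * y - 1) ^ 2)
          + l4 * ((x ^ 2 - y ^ 2) / (2 * y - 1) ^ 2)
          + l5 * (2 * x * y / (2 * y - 1) ^ 2))
      = -(2 * π * (h - 1) * (h * (l1 + l3) - 2 * l5)) := by
  intro R γ₁ γ₂ lineInt
  have hR0 : (0:ℝ) ≤ R := Real.sqrt_nonneg _
  have hR2 : R^2 = h*(h-1) := Real.sq_sqrt (by nlinarith)
  have hD := hDpos h R hh hR0 hR2
  have hne : ∀ t : ℝ, (2*(h + R*Real.sin t) - 1) ≠ 0 := fun t => (hD t).ne'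
  have hd1 : (deriv fun t => R * Real.cos t) = fun t => R * -Real.sin t :=
    funext fun t => ((Real.hasDerivAt_cos t).const_mul R).deriv
  have hd2 : (deriv fun t => h + R * Real.sin t) = fun t => R * Real.cos t :=
    funext fun t => (((Real.hasDerivAt_sin t).const_mul R).const_add h).deriv
  have e1 : ∀ t : ℝ, (-(h + R*Real.sin t)/(2*(h + R*Real.sin t) - 1)^2 * (R * -Real.sin t) + (R*Real.cos t)/(2*(h + R*Real.sin t) - 1)^2 * (R*Real.cos t)) = (-(R^2)*(2*(h + R*Real.sin t) - 1) + h*R*Real.sin t*(2*(h + R*Real.sin t) - 1) + 2*h*R^2*Real.cos t^2)/(2*(h + R*Real.sin t) - 1)^2 := by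
    intro t
    have hs := Real.sin_sq_add_cos_sq t
    have hne' : (h + R*Real.sin t)*2 - 1 ≠ 0 := by intro hc; apply hne t; linarith
    field_simp [hne t, hne']
    ring_nf
    linear_combination ((1)*(R)^2 + (-2)*(h)^1*(R)^2) * hs + ((2)*(R)^1*(Real.sin t)^1) * hR2
  have e2 : ∀ t : ℝ, (((R*Real.cos t)^2 + (h + R*Real.sin t)^2)/(2*(h + R*Real.sin t) - 1)^2 * (R*Real.cos t)) = (h*R*Real.cos t*(2*(h + R*Real.sin t) - 1))/(2*(h + R*Real.sin t) - 1)^2 := by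
    intro t
    have hs := Real.sin_sq_add_cos_sq t
    have hne' : (h + R*Real.sin t)*2 - 1 ≠ 0 := by intro hc; apply hne t; linarith
    field_simp [hne t, hne']
    ring_nf
    linear_combination ((1)*(R)^3*(Real.cos t)^1) * hs + ((1)*(R)^1*(Real.cos t)^1) * hR2
  have e3 : ∀ t : ℝ, (-((R*Real.cos t)^2 + (h + R*Real.sin t)^2)/(2*(h + R*Real.sin t) - 1)^2 * (R * -Real.sin t)) = (h*R*Real.sin t*(2*(h + R*Real.sin t) - 1))/(2*(h + R*Real.sin t) - 1)^2 := by
    intro t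
    have hs := Real.sin_sq_add_cos_sq t
    have hne' : (h + R*Real.sin t)*2 - 1 ≠ 0 := by intro hc; apply hne t; linarith
    field_simp [hne t, hne']
    ring_nf
    linear_combination ((1)*(R)^3*(Real.sin t)^1) * hs + ((1)*(R)^1*(Real.sin t)^1) * hR2
  have e4 : ∀ t : ℝ, (2*(R*Real.cos t)*(h + R*Real.sin t)/(2*(h + R*Real.sin t) - 1)^2 * (R * -Real.sin t) + ((R*Real.cos t)^2 - (h + R*Real.sin t)^2)/(2*(h + R*Real.sin t) - 1)^2 * (R*Real.cos t)) = (-(R*Real.cos t)*(2*(h + R*Real.sin t) - 1)^2 + 2*(h-1)*R*Real.cos t*(2*(h + R*Real.sin t) - 1) + (h-1)*R*Real.cos t)/(2*(h + R*Real.sin t) - 1)^2 := by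
    intro t
    have hs := Real.sin_sq_add_cos_sq t
    have hne' : (h + R*Real.sin t)*2 - 1 ≠ 0 := by intro hc; apply hne t; linarith
    field_simp [hne t, hne']
    ring_nf
    linear_combination ((1)*(R)^3*(Real.cos t)^1) * hs + ((1)*(R)^1*(Real.cos t)^1) * hR2
  have e5 : ∀ t : ℝ, (-((R*Real.cos t)^2 - (h + R*Real.sin t)^2)/(2*(h + R*Real.sin t) - 1)^2 * (R * -Real.sin t) + 2*(R*Real.cos t)*(h + R*Real.sin t)/(2*(h + R*Real.sin t) - 1)^2 * (R*Real.cos t)) = ((h-1)*(2*(h + R*Real.sin t) - 1)^2 + (h-1)*(2*(h + R*Real.sin t) - 1) - R*(h-1)*(Real.sin t*(2*(h + R*Real.sin t) - 1) + 2*R*Real.cos t^2) - R*Real.sin t*(2*(h + R*Real.sin t) - 1)^2)/(2*(h + R*Real.sin t) - 1)^2 := by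
    intro t
    have hs := Real.sin_sq_add_cos_sq t
    have hne' : (h + R*Real.sin t)*2 - 1 ≠ 0 := by intro hc; apply hne t; linarith
    field_simp [hne t, hne']
    ring_nf
    linear_combination ((3)*(R)^3*(Real.sin t)^1 + (4)*(h)^1*(R)^2 + (-2)*(R)^2) * hs + ((3)*(R)^1*(Real.sin t)^1 + (4)*(h)^1 + (-2)) * hR2
  unfold lineInt γ₁ γ₂
  refine ⟨fun t => (hD t).ne', ?_, ?_, ?_, ?_, ?_, ?_⟩
  · refine key _ (fun t => (-(R^2)*(2*(h + R*Real.sin t) - 1) + h*R*Real.sin t*(2*(h + R*Real.sin t) - 1) + 2*h*R^2*Real.cos t^2)/(2*(h + R*Real.sin t) - 1)^2) (fun t => (-(R^2))*(t + 2*Real.arctan (2*R*Real.cos t/(2*(h + R*Real.sin t)))) - h*R*(Real.cos t/(2*(h + R*Real.sin t) - 1))) _ ?_ (fun t => hasD1 h R hh hR0 hR2 t) ?_ ?_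
    · intro t
      simp only [hd1, hd2]
      linear_combination e1 t
    · exact Continuous.div (by fun_prop) (by fun_prop) (fun t => pow_ne_zero 2 (hne t))
    · simp [Real.sin_two_pi, Real.cos_two_pi]
      linear_combination (-(2*π))*hR2
  · refine key _ (fun t => (h*R*Real.cos t*(2*(h + R*Real.sin t) - 1))/(2*(h + R*Real.sin t) - 1)^2) (fun t => h/2*Real.log (2*(h + R*Real.sin t) - 1)) _ ?_ (fun t => hasD2 h R hh hR0 hR2 t) ?_ ?_
    · intro t
      simp only [hd1, hd2]
      linear_combination e2 t
    · exact Continuous.div (by fun_prop) (by fun_prop) (fun t => pow_ne_zero 2 (hne t))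
    · simp [Real.sin_two_pi, Real.cos_two_pi]
  · refine key _ (fun t => (h*R*Real.sin t*(2*(h + R*Real.sin t) - 1))/(2*(h + R*Real.sin t) - 1)^2) (fun t => h*(1-h)*t - h*(2*h-1)*Real.arctan (2*R*Real.cos t/(2*(h + R*Real.sin t)))) _ ?_ (fun t => hasD3 h R hh hR0 hR2 t) ?_ ?_
    · intro t
      simp only [hd1, hd2]
      linear_combination e3 t
    · exact Continuous.div (by fun_prop) (by fun_prop) (fun t => pow_ne_zero 2 (hne t))
    · simp [Real.sin_two_pi, Real.cos_two_pi]
      ring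
  · refine key _ (fun t => (-(R*Real.cos t)*(2*(h + R*Real.sin t) - 1)^2 + 2*(h-1)*R*Real.cos t*(2*(h + R*Real.sin t) - 1) + (h-1)*R*Real.cos t)/(2*(h + R*Real.sin t) - 1)^2) (fun t => -(R*Real.sin t) + (h-1)*Real.log (2*(h + R*Real.sin t) - 1) - (h-1)/(2*(2*(h + R*Real.sin t) - 1))) _ ?_ (fun t => hasD4 h R hh hR0 hR2 t) ?_ ?_
    · intro t
      simp only [hd1, hd2]
      linear_combination e4 t
    · exact Continuous.div (by fun_prop) (by fun_prop) (fun t => pow_ne_zero 2 (hne t))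
    · simp [Real.sin_two_pi, Real.cos_two_pi]
  · refine key _ (fun t => ((h-1)*(2*(h + R*Real.sin t) - 1)^2 + (h-1)*(2*(h + R*Real.sin t) - 1) - R*(h-1)*(Real.sin t*(2*(h + R*Real.sin t) - 1) + 2*R*Real.cos t^2) - R*Real.sin t*(2*(h + R*Real.sin t) - 1)^2)/(2*(h + R*Real.sin t) - 1)^2) (fun t => 2*(h-1)*t + 2*(h-1)*Real.arctan (2*R*Real.cos t/(2*(h + R*Real.sin t))) + R*(h-1)*(Real.cos t/(2*(h + R*Real.sin t) - 1)) + R*Real.cos t) _ ?_ (fun t => hasD5 h R hh hR0 hR2 t) ?_ ?_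
    · intro t
      simp only [hd1, hd2]
      linear_combination e5 t
    · exact Continuous.div (by fun_prop) (by fun_prop) (fun t => pow_ne_zero 2 (hne t))
    · simp [Real.sin_two_pi, Real.cos_two_pi]
      ring
  · refine key _ (fun t => l1*((-(R^2)*(2*(h + R*Real.sin t) - 1) + h*R*Real.sin t*(2*(h + R*Real.sin t) - 1) + 2*h*R^2*Real.cos t^2)/(2*(h + R*Real.sin t) - 1)^2) + l2*((h*R*Real.cos t*(2*(h + R*Real.sin t) - 1))/(2*(h + R*Real.sin t) - 1)^2) + l3*((h*R*Real.sin t*(2*(h + R*Real.sin t) - 1))/(2*(h + R*Real.sin t) - 1)^2) + l4*((-(R*Real.cos t)*(2*(h + R*Real.sin t) - 1)^2 + 2*(h-1)*R*Real.cos t*(2*(h + R*Real.sin t) - 1) + (h-1)*R*Real.cos t)/(2*(h + R*Real.sin t) - 1)^2) + l5*(((h-1)*(2*(h + R*Real.sin t) - 1)^2 + (h-1)*(2*(h + R*Real.sin t) - 1) - R*(h-1)*(Real.sin t*(2*(h + R*Real.sin t) - 1) + 2*R*Real.cos t^2) - R*Real.sin t*(2*(h + R*Real.sin t) - 1)^2)/(2*(h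 + R*Real.sin t) - 1)^2)) (fun t => l1*( (-(R^2))*(t + 2*Real.arctan (2*R*Real.cos t/(2*(h + R*Real.sin t)))) - h*R*(Real.cos t/(2*(h + R*Real.sin t) - 1))) + l2*( h/2*Real.log (2*(h + R*Real.sin t) - 1)) + l3*( h*(1-h)*t - h*(2*h-1)*Real.arctan (2*R*Real.cos t/(2*(h + R*Real.sin t)))) + l4*( -(R*Real.sin t) + (h-1)*Real.log (2*(h + R*Real.sin t) - 1) - (h-1)/(2*(2*(h + R*Real.sin t) - 1))) + l5*( 2*(h-1)*t + 2*(h-1)*Real.arctan (2*R*Real.cos t/(2*(h + R*Real.sin t))) + R*(h-1)*(Real.cos t/(2*(h + R*Real.sin t) - 1)) + R*Real.cos t)) _ ?_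
      (fun t => ((((((hasD1 h R hh hR0 hR2 t).const_mul l1).add ((hasD2 h R hh hR0 hR2 t).const_mul l2)).add ((hasD3 h R hh hR0 hR2 t).const_mul l3)).add ((hasD4 h R hh hR0 hR2 t).const_mul l4)).add ((hasD5 h R hh hR0 hR2 t).const_mul l5))) ?_ ?_
    · intro t
      simp only [hd1, hd2]
      linear_combination l1*(e1 t) + l2*(e2 t) + l3*(e3 t) + l4*(e4 t) + l5*(e5 t)
    · have c1 : Continuous (fun t => (-(R^2)*(2*(h + R*Real.sin t) - 1) + h*R*Real.sin t*(2*(h + R*Real.sin t) - 1) + 2*h*R^2*Real.cos t^2)/(2*(h + R*Real.sin t) - 1)^2) := Continuous.div (by fun_prop) (by fun_prop) (fun t => pow_ne_zero 2 (hne t))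
      have c2 : Continuous (fun t => (h*R*Real.cos t*(2*(h + R*Real.sin t) - 1))/(2*(h + R*Real.sin t) - 1)^2) := Continuous.div (by fun_prop) (by fun_prop) (fun t => pow_ne_zero 2 (hne t))
      have c3 : Continuous (fun t => (h*R*Real.sin t*(2*(h + R*Real.sin t) - 1))/(2*(h + R*Real.sin t) - 1)^2) := Continuous.div (by fun_prop) (by fun_prop) (fun t => pow_ne_zero 2 (hne t))
      have c4 : Continuous (fun t => (-(R*Real.cos t)*(2*(h + R*Real.sin t) - 1)^2 + 2*(h-1)*R*Real.cos t*(2*(h + R*Real.sin t) - 1) + (h-1)*R*Real.cos t)/(2*(h + R*Real.sin t) - 1)^2) := Continuous.div (by fun_prop) (by fun_prop) (fun t => pow_ne_zero 2 (hne t))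
      have c5 : Continuous (fun t => ((h-1)*(2*(h + R*Real.sin t) - 1)^2 + (h-1)*(2*(h + R*Real.sin t) - 1) - R*(h-1)*(Real.sin t*(2*(h + R*Real.sin t) - 1) + 2*R*Real.cos t^2) - R*Real.sin t*(2*(h + R*Real.sin t) - 1)^2)/(2*(h + R*Real.sin t) - 1)^2) := Continuous.div (by fun_prop) (by fun_prop) (fun t => pow_ne_zero 2 (hne t))
      exact ((((continuous_const.mul c1).add (continuous_const.mul c2)).add (continuous_const.mul c3)).add (continuous_const.mul c4)).add (continuous_const.mul c5)
    · simp [Real.sin_two_pi, Real.cos_two_pi]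
      linear_combination (-(2*π)*l1)*hR2
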